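/- In the W-graph ideal setting, let R and R̃ be the matrices of the bar involutions on M(E_J,L) and M̃(E_J,L) respectively: Γ̄_y = Σ_x R_{x,y} Γ_x and Γ̃̄_y = Σ_x R̃_{x,y} Γ̃_x. Then R̄_{x,y} = ε_x ε_y R̃_{x,y} for all x, y ∈ E_J. -/

import Mathlib

/-- The (strong) Bruhat order on a Coxeter group. -/
def bruhatLE {B W : Type*} [Group W] {M : CoxeterMatrix B} (cs : CoxeterSystem M W) :
    W → W → Prop :=
  Relation.ReflTransGen fun x y =>
    ∃ t, cs.IsReflection t ∧ y = t * x ∧ cs.length x < cs.length y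

/-- The set of minimal length left coset representatives of `W / W_J`. -/
def DJset {B W : Type*} [Group W] {M : CoxeterMatrix B} (cs : CoxeterSystem M W)
    (J : Set B) : Set W :=
  {w | ∀ j ∈ J, cs.length w < cs.length (w * cs.simple j)}

noncomputable def etaMap {E A : Type*} [CommRing A] (ε : E → A) (bar : A →+* A)
    (m : E →₀ A) : E →₀ A :=
  Finsupp.onFinset m.support (fun x => ε x * bar (m x)) (fun x h => by
    rw [Finsupp.mem_support_iff]
    intro h0
    simp [h0] at h)

theorem etaMap_apply {E A : Type*} [CommRing A] (ε : E → A) (bar : A →+* A)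
    (m : E →₀ A) (x : E) : etaMap ε bar m x = ε x * bar (m x) := rfl

theorem etaMap_add {E A : Type*} [CommRing A] (ε : E → A) (bar : A →+* A)
    (m m' : E →₀ A) : etaMap ε bar (m + m') = etaMap ε bar m + etaMap ε bar m' := by
  ext x; simp [etaMap_apply, mul_add]

theorem etaMap_sub {E A : Type*} [CommRing A] (ε : E → A) (bar : A →+* A)
    (m m' : E →₀ A) : etaMap ε bar (m - m') = etaMap ε bar m - etaMap ε bar m' := by
  ext x; simp [etaMap_apply, mul_sub]

theorem etaMap_smul {E A : Type*} [CommRing A] (ε : E → A) (bar : A →+* A)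
    (a : A) (m : E →₀ A) : etaMap ε bar (a • m) = bar a • etaMap ε bar m := by
  ext x; simp only [etaMap_apply, Finsupp.smul_apply, smul_eq_mul, map_mul]; ring

theorem etaMap_zero {E A : Type*} [CommRing A] (ε : E → A) (bar : A →+* A) :
    etaMap ε bar (0 : E →₀ A) = 0 := by
  ext x; simp [etaMap_apply]

theorem etaMap_single {E A : Type*} [CommRing A] (ε : E → A) (bar : A →+* A)
    (w : E) (a : A) :
    etaMap ε bar (Finsupp.single w a) = Finsupp.single w (ε w * bar a) := by
  ext x
  rcases eq_or_ne w x with h | h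
  · subst h; simp [etaMap_apply]
  · simp [etaMap_apply, Finsupp.single_eq_of_ne' h]

/-- Corollary 3.2: if `R` and `R̃` are the matrices of the bar involutions of the
dual modules `M(E_J,L)` and `M̃(E_J,L)` (`Γ̄_y = Σ_x R_{x,y} Γ_x`,
`Γ̃̄_y = Σ_x R̃_{x,y} Γ̃_x`), then `R̄_{x,y} = ε_x ε_y R̃_{x,y}`. -/
theorem stmt_15 {B W : Type*} [Group W] {CM : CoxeterMatrix B} (cs : CoxeterSystem CM W)
    (J : Set B) (E : Set W)
    (hE1 : (1 : W) ∈ E) (hEDJ : E ⊆ DJset cs J)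
    (hIdeal : ∀ w ∈ E, ∀ u z : W, w = z * u →
      cs.length w = cs.length z + cs.length u → u ∈ E)
    {A : Type*} [CommRing A]
    (bar : A ≃+* A) (hbarinv : ∀ a : A, bar (bar a) = a)
    (q q' : B → A) (hq : ∀ s, q s * q' s = 1) (hbarq : ∀ s, bar (q s) = q' s)
    -- the module `M(E_J, L)`, realised on its basis `Γ_w = single w 1`
    (Ts : B → (E →₀ A) →ₗ[A] (E →₀ A))
    (Γ : E → (E →₀ A)) (hΓ : ∀ e : E, Γ e = Finsupp.single e 1)
    (hminus : ∀ (s : B) (w : E) (h : cs.simple s * (w : W) ∈ E),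
      cs.length (cs.simple s * (w : W)) < cs.length (w : W) →
      Ts s (Γ w) = Γ ⟨cs.simple s * (w : W), h⟩ + (q s - q' s) • Γ w)
    (hplus : ∀ (s : B) (w : E) (h : cs.simple s * (w : W) ∈ E),
      cs.length (w : W) < cs.length (cs.simple s * (w : W)) →
      Ts s (Γ w) = Γ ⟨cs.simple s * (w : W), h⟩)
    (h0minus : ∀ (s : B) (w : E),
      cs.length (w : W) < cs.length (cs.simple s * (w : W)) →
      cs.simple s * (w : W) ∉ DJset cs J →
      Ts s (Γ w) = - (q' s) • Γ w)
    (r : B → E → (E →₀ A))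
    (hrsupp : ∀ (s : B) (w : E) (z : E), (r s w) z ≠ 0 →
      bruhatLE cs (z : W) (w : W) ∧ (z : W) ≠ (w : W))
    (h0plus : ∀ (s : B) (w : E),
      cs.length (w : W) < cs.length (cs.simple s * (w : W)) →
      cs.simple s * (w : W) ∈ DJset cs J →
      cs.simple s * (w : W) ∉ E →
      Ts s (Γ w) = q s • Γ w - (r s w).sum fun z a => a • Γ z)
    (barM : (E →₀ A) → (E →₀ A))
    (hbarMadd : ∀ m m' : E →₀ A, barM (m + m') = barM m + barM m')
    (hbarMsemi : ∀ (a : A) (m : E →₀ A), barM (a • m) = bar a • barM m)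
    (hbarM1 : barM (Γ ⟨1, hE1⟩) = Γ ⟨1, hE1⟩)
    (hbarMT : ∀ (s : B) (m : E →₀ A),
      barM (Ts s m) = Ts s (barM m) + (q' s - q s) • barM m)
    -- the dual module `M̃(E_J, L)`, realised on its basis `Γ̃_w = single w 1`
    (Tst : B → (E →₀ A) →ₗ[A] (E →₀ A))
    (htminus : ∀ (s : B) (w : E) (h : cs.simple s * (w : W) ∈ E),
      cs.length (cs.simple s * (w : W)) < cs.length (w : W) →
      Tst s (Γ w) = Γ ⟨cs.simple s * (w : W), h⟩ + (q s - q' s) • Γ w)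
    (htplus : ∀ (s : B) (w : E) (h : cs.simple s * (w : W) ∈ E),
      cs.length (w : W) < cs.length (cs.simple s * (w : W)) →
      Tst s (Γ w) = Γ ⟨cs.simple s * (w : W), h⟩)
    (ht0minus : ∀ (s : B) (w : E),
      cs.length (w : W) < cs.length (cs.simple s * (w : W)) →
      cs.simple s * (w : W) ∉ DJset cs J →
      Tst s (Γ w) = q s • Γ w)
    (rt : B → E → (E →₀ A))
    (hrt : ∀ (s : B) (w : E) (z : E),
      (rt s w) z =
        (-1 : A) ^ (cs.length (z : W) + cs.length (w : W)) * bar ((r s w) z))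
    (ht0plus : ∀ (s : B) (w : E),
      cs.length (w : W) < cs.length (cs.simple s * (w : W)) →
      cs.simple s * (w : W) ∈ DJset cs J →
      cs.simple s * (w : W) ∉ E →
      Tst s (Γ w) = - (q' s) • Γ w + (rt s w).sum fun z a => a • Γ z)
    (barMt : (E →₀ A) → (E →₀ A))
    (hbarMtadd : ∀ m m' : E →₀ A, barMt (m + m') = barMt m + barMt m')
    (hbarMtsemi : ∀ (a : A) (m : E →₀ A), barMt (a • m) = bar a • barMt m)
    (hbarMt1 : barMt (Γ ⟨1, hE1⟩) = Γ ⟨1, hE1⟩)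
    (hbarMtT : ∀ (s : B) (m : E →₀ A),
      barMt (Tst s m) = Tst s (barMt m) + (q' s - q s) • barMt m)
    -- the `R`- and `R̃`-polynomials
    (R Rt : E → E → A)
    (hR : ∀ x y : E, R x y = (barM (Γ y)) x)
    (hRt : ∀ x y : E, Rt x y = (barMt (Γ y)) x) :
    ∀ x y : E,
      bar (R x y) =
        (-1 : A) ^ cs.length (x : W) * (-1 : A) ^ cs.length (y : W) * Rt x y := by
  classical
  set Eta : (E →₀ A) → (E →₀ A) :=
    etaMap (fun x : E => (-1 : A) ^ cs.length (x : W)) bar.toRingHom with hE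
  have hbarq' : ∀ s, bar (q' s) = q s := fun s => by rw [← hbarq, hbarinv]
  have hEapply : ∀ (m : E →₀ A) (x : E),
      Eta m x = (-1 : A) ^ cs.length (x : W) * bar (m x) := by
    intro m x; rw [hE]; rfl
  have hEadd : ∀ m m' : E →₀ A, Eta (m + m') = Eta m + Eta m' := by
    intro m m'; rw [hE]; exact etaMap_add _ _ _ _
  have hEsub : ∀ m m' : E →₀ A, Eta (m - m') = Eta m - Eta m' := by
    intro m m'; rw [hE]; exact etaMap_sub _ _ _ _
  have hEsmul : ∀ (a : A) (m : E →₀ A), Eta (a • m) = bar a • Eta m := by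
    intro a m; rw [hE]; exact etaMap_smul _ _ _ _
  have hE0 : Eta 0 = 0 := by rw [hE]; exact etaMap_zero _ _
  have hEΓ : ∀ w : E, Eta (Γ w) = ((-1 : A) ^ cs.length (w : W)) • Γ w := by
    intro w
    rw [hΓ, hE, etaMap_single, Finsupp.smul_single', mul_one]
    norm_num
  have hsq : ∀ z : E, (-1 : A) ^ cs.length (z : W) * (-1 : A) ^ cs.length (z : W) = 1 := by
    intro z
    rw [← pow_add, ← two_mul, pow_mul]
    norm_num
  have hbarε : ∀ z : E, bar ((-1 : A) ^ cs.length (z : W)) = (-1 : A) ^ cs.length (z : W) := by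
    intro z; rw [map_pow, map_neg, map_one]
  have hsum : ∀ f : E →₀ A, (f.sum fun z a => a • Γ z) = f := by
    intro f
    have : (f.sum fun z a => a • Γ z) = f.sum fun z a => Finsupp.single z a := by
      apply Finsupp.sum_congr
      intro z _
      rw [hΓ, Finsupp.smul_single', mul_one]
    rw [this, Finsupp.sum_single]
  have hmemE : ∀ (s : B) (w : E), cs.IsLeftDescent (w : W) s →
      cs.simple s * (w : W) ∈ E := by
    intro s w hd
    refine hIdeal w w.2 (cs.simple s * (w : W)) (cs.simple s)
      (cs.simple_mul_simple_cancel_left s).symm ?_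
    have h1 := cs.isLeftDescent_iff.mp hd
    rw [cs.length_simple]
    omega
  -- the key commutation on basis elements
  have L1 : ∀ (s : B) (w : E), Eta (Ts s (Γ w)) = - Tst s (Eta (Γ w)) := by
    intro s w
    by_cases hd : cs.IsLeftDescent (w : W) s
    · have hm := hmemE s w hd
      have hlt : cs.length (cs.simple s * (w : W)) < cs.length (w : W) := hd
      have hES : ((-1 : A)) ^ cs.length (((⟨cs.simple s * (w : W), hm⟩ : E)) : W)
          = -(-1 : A) ^ cs.length (w : W) := by
        show ((-1 : A)) ^ cs.length (cs.simple s * (w : W)) = _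
        rw [show cs.length (w : W) = cs.length (cs.simple s * (w : W)) + 1 from
          (cs.isLeftDescent_iff.mp hd).symm, pow_succ]
        ring
      rw [hminus s w hm hlt, hEadd, hEsmul, hEΓ, hEΓ, hES, map_sub, hbarq, hbarq',
        map_smul, htminus s w hm hlt]
      module
    · have hgt : cs.length (w : W) < cs.length (cs.simple s * (w : W)) := by
        have := cs.not_isLeftDescent_iff.mp hd
        omega
      have hlen2 : cs.length (cs.simple s * (w : W)) = cs.length (w : W) + 1 :=
        cs.not_isLeftDescent_iff.mp hd
      by_cases hm : cs.simple s * (w : W) ∈ E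
      · have hES : ((-1 : A)) ^ cs.length (((⟨cs.simple s * (w : W), hm⟩ : E)) : W)
            = -(-1 : A) ^ cs.length (w : W) := by
          show ((-1 : A)) ^ cs.length (cs.simple s * (w : W)) = _
          rw [hlen2, pow_succ]
          ring
        rw [hplus s w hm hgt, hEΓ, hES, hEΓ, map_smul, htplus s w hm hgt]
        module
      · by_cases hDJ : cs.simple s * (w : W) ∈ DJset cs J
        · have hrwmain : Ts s (Γ w) = q s • Γ w - r s w := by
            rw [h0plus s w hgt hDJ hm, hsum]
          have htst : Tst s (Γ w) = - (q' s) • Γ w + rt s w := by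
            rw [ht0plus s w hgt hDJ hm, hsum]
          have hetar : Eta (r s w) = ((-1 : A) ^ cs.length (w : W)) • rt s w := by
            ext x
            rw [hEapply, Finsupp.smul_apply, smul_eq_mul, hrt, pow_add]
            linear_combination
              (-( (-1 : A) ^ cs.length (x : W) * bar ((r s w) x))) * hsq w
          rw [hrwmain, hEsub, hEsmul, hEΓ, hbarq, hetar, map_smul, htst]
          module
        · rw [h0minus s w hgt hDJ, hEsmul, hEΓ, map_neg, hbarq', map_smul,
            ht0minus s w hgt hDJ]
          module
  -- the key commutation on everything
  have L2 : ∀ (s : B) (m : E →₀ A), Eta (Ts s m) = - Tst s (Eta m) := by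
    intro s m
    induction m using Finsupp.induction with
    | zero => rw [map_zero, hE0, map_zero, neg_zero]
    | single_add a b f _ _ ih =>
      have hsingle : Finsupp.single a b = b • Γ a := by
        rw [hΓ, Finsupp.smul_single', mul_one]
      rw [hsingle, map_add, hEadd, map_smul, hEsmul, L1, ih, hEadd, hEsmul,
        map_add, map_smul]
      module
  have hbarMtneg : ∀ m : E →₀ A, barMt (-m) = - barMt m := by
    intro m
    have h := hbarMtsemi (-1) m
    rw [neg_one_smul] at h
    rw [h, map_neg, map_one, neg_one_smul]
  -- the intertwining of the two bar involutions, by induction on length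
  have L3 : ∀ (n : ℕ) (w : E), cs.length (w : W) ≤ n →
      Eta (barM (Γ w)) = barMt (Eta (Γ w)) := by
    intro n
    induction n with
    | zero =>
      intro w hw
      have hw1 : (w : W) = 1 := cs.length_eq_zero_iff.mp (Nat.le_zero.mp hw)
      have hweq : w = ⟨1, hE1⟩ := Subtype.ext hw1
      have hEΓ1 : Eta (Γ ⟨1, hE1⟩) = Γ ⟨1, hE1⟩ := by
        rw [hEΓ]
        norm_num [show cs.length ((⟨1, hE1⟩ : E) : W) = 0 from cs.length_one]
      rw [hweq, hbarM1, hEΓ1, hbarMt1]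
    | succ n ih =>
      intro w hw
      rcases Nat.lt_or_ge (cs.length (w : W)) (n + 1) with h | h
      · exact ih w (Nat.lt_succ_iff.mp h)
      · have hlen : cs.length (w : W) = n + 1 := le_antisymm hw h
        have hne : (w : W) ≠ 1 := by
          intro h1
          rw [h1, cs.length_one] at hlen
          omega
        obtain ⟨s, hd⟩ := cs.exists_leftDescent_of_ne_one hne
        have hm := hmemE s w hd
        have hdlen := cs.isLeftDescent_iff.mp hd
        set u : E := ⟨cs.simple s * (w : W), hm⟩ with hu
        have hsu : cs.simple s * (u : W) = (w : W) :=
          cs.simple_mul_simple_cancel_left s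
        have hmw : cs.simple s * (u : W) ∈ E := by rw [hsu]; exact w.2
        have hlu : cs.length (u : W) < cs.length (cs.simple s * (u : W)) := by
          rw [hsu]; exact hd
        have hGw : Γ w = Ts s (Γ u) := by
          rw [hplus s u hmw hlu]
          exact congrArg Γ (Subtype.ext hsu.symm)
        have ihu : Eta (barM (Γ u)) = barMt (Eta (Γ u)) := by
          refine ih u ?_
          have : cs.length (u : W) = cs.length (cs.simple s * (w : W)) := rfl
          omega
        rw [hGw, hbarMT s (Γ u), hEadd, hEsmul, L2, ihu, L2, hbarMtneg,
          hbarMtT s (Eta (Γ u)), map_sub, hbarq, hbarq']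
        module
  intro x y
  have hmain := L3 (cs.length (y : W)) y le_rfl
  have hx := congrArg (fun f : E →₀ A => f x) hmain
  rw [hEapply, hEΓ, hbarMtsemi, hbarε, Finsupp.smul_apply, smul_eq_mul] at hx
  rw [hR, hRt]
  linear_combination ((-1 : A) ^ cs.length (x : W)) * hx
    - (bar ((barM (Γ y)) x)) * hsq x
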